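/- Let Y be a separable complex Banach space, 𝔛 = Y* its dual space, and {T(t)}_{t≥0} a family of ℂ-linear contractions on 𝔛 (‖T(t)x‖ ≤ ‖x‖) with T(0) = id and T(s)T(t) = T(s+t), such that each T(t) is continuous from the weak-* topology of 𝔛 to itself, and for each x ∈ 𝔛 the map t ↦ T(t)x is weak-* continuous. Then T(t)x is jointly weak-* continuous in t and x on the closed unit ball of 𝔛: the map (t,x) ↦ T(t)x from [0,∞) × 𝔛₁ to 𝔛₁ (with 𝔛₁ the closed unit ball carrying the weak-* topology) is continuous. -/

import Mathlib

open scoped NNReal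
open Filter MeasureTheory intervalIntegral

/-- A weak-*-continuous linear functional on the dual of `Y` is evaluation at a point of `Y`. -/
lemma wstar_rep (Y : Type*) [NormedAddCommGroup Y] [NormedSpace ℂ Y]
    (φ : (Y →L[ℂ] ℂ) →ₗ[ℂ] ℂ)
    (hφ : @Continuous _ _ (TopologicalSpace.induced
      (fun (x : Y →L[ℂ] ℂ) (y : Y) => x y) Pi.topologicalSpace) _ φ) :
    ∃ z : Y, ∀ x : Y →L[ℂ] ℂ, φ x = x z := by
  letI τ : TopologicalSpace (Y →L[ℂ] ℂ) := TopologicalSpace.induced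
      (fun (x : Y →L[ℂ] ℂ) (y : Y) => x y) Pi.topologicalSpace
  -- continuity at 0
  have h0 : Filter.Tendsto φ (@nhds _ τ 0) (nhds 0) := by
    simpa using (hφ.tendsto 0)
  have hball : φ ⁻¹' (Metric.ball 0 1) ∈ @nhds _ τ 0 :=
    h0 (Metric.ball_mem_nhds _ one_pos)
  rw [nhds_induced] at hball
  obtain ⟨U, hU, hUsub⟩ := hball
  simp only [ContinuousLinearMap.zero_apply] at hU
  rw [nhds_pi] at hU
  obtain ⟨I, hIfin, V, hV, hVsub⟩ := Filter.mem_pi.mp hU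
  -- if x vanishes on I, then φ x = 0
  have hker : ∀ x : Y →L[ℂ] ℂ, (∀ y ∈ I, x y = 0) → φ x = 0 := by
    intro x hx
    by_contra hne
    obtain ⟨c, hc⟩ : ∃ c : ℂ, 1 < ‖c * φ x‖ := by
      refine ⟨(2 : ℂ) / φ x, ?_⟩
      rw [div_mul_cancel₀]
      · norm_num
      · exact hne
    have hmem : (fun y : Y => (c • x) y) ∈ Set.pi I V := by
      intro y hy
      show (c • x) y ∈ V y
      have : (c • x) y = 0 := by simp [hx y hy]
      rw [this]
      exact mem_of_mem_nhds (hV y)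
    have := hUsub (hVsub hmem)
    simp only [Set.mem_preimage, Metric.mem_ball, dist_zero_right] at this
    rw [_root_.map_smul] at this
    simp only [smul_eq_mul] at this
    exact absurd this (not_lt.mpr hc.le)
  haveI : Finite I := hIfin
  -- linear functionals of evaluation
  let L : I → ((Y →L[ℂ] ℂ) →ₗ[ℂ] ℂ) := fun i =>
    { toFun := fun x => x i.1
      map_add' := fun a b => rfl
      map_smul' := fun c a => rfl }
  have hsub : (⨅ i : I, LinearMap.ker (L i)) ≤ LinearMap.ker φ := by
    intro x hx
    simp only [Submodule.mem_iInf, LinearMap.mem_ker] at hx ⊢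
    exact hker x fun y hy => hx ⟨y, hy⟩
  have hspan := mem_span_of_iInf_ker_le_ker hsub
  haveI : Fintype I := hIfin.fintype
  obtain ⟨c, hc⟩ := (Submodule.mem_span_range_iff_exists_fun ℂ).mp hspan
  refine ⟨∑ i : I, c i • i.1, fun x => ?_⟩
  have := LinearMap.congr_fun hc x
  simp only [LinearMap.coe_sum, Finset.sum_apply, LinearMap.smul_apply] at this
  rw [← this, map_sum]
  simp [L, smul_eq_mul]

/-- A weakly continuous function into a separable Banach space is strongly measurable. -/
lemma weak_stronglyMeasurable (Y : Type*) [NormedAddCommGroup Y] [NormedSpace ℂ Y]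
    [CompleteSpace Y] [TopologicalSpace.SeparableSpace Y]
    (f : ℝ → Y) (hfw : ∀ x : Y →L[ℂ] ℂ, Continuous fun s => x (f s)) :
    MeasureTheory.StronglyMeasurable f := by
  haveI : Nonempty Y := ⟨0⟩
  haveI : SecondCountableTopology Y := UniformSpace.secondCountable_of_separable Y
  borelize Y
  rw [stronglyMeasurable_iff_measurable]
  set d := TopologicalSpace.denseSeq Y with hd
  have hdd : DenseRange d := TopologicalSpace.denseRange_denseSeq Y
  have hx : ∀ n : ℕ, ∃ g : Y →L[ℂ] ℂ, ‖g‖ ≤ 1 ∧ g (d n) = ‖d n‖ := fun n =>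
    exists_dual_vector'' ℂ (d n)
  choose xseq hxnorm hxval using hx
  set ι : Y → ℕ → ℂ := fun z n => xseq n z with hι
  have hιcont : Continuous ι := continuous_pi fun n => (xseq n).continuous
  have hιinj : Function.Injective ι := by
    intro a b hab
    by_contra hne
    set z := a - b with hz
    have hz0 : z ≠ 0 := sub_ne_zero.mpr hne
    have hxz : ∀ n, xseq n z = 0 := by
      intro n
      have := congrFun hab n
      simp only [hι] at this
      simp [hz, map_sub, this]
    have hz0' : 0 < ‖z‖ := norm_pos_iff.mpr hz0
    obtain ⟨n, hn⟩ := hdd.exists_dist_lt z (by linarith : (0:ℝ) < ‖z‖ / 3)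
    rw [dist_eq_norm] at hn
    have h1 : ‖d n‖ < ‖z‖ / 3 := by
      have : (xseq n) (d n) = (xseq n) (d n - z) := by
        rw [map_sub, hxz n, sub_zero]
      have h2 : ‖(xseq n) (d n)‖ ≤ ‖d n - z‖ := by
        rw [this]
        calc ‖(xseq n) (d n - z)‖ ≤ ‖xseq n‖ * ‖d n - z‖ := (xseq n).le_opNorm _
          _ ≤ 1 * ‖d n - z‖ := by
            apply mul_le_mul_of_nonneg_right (hxnorm n) (norm_nonneg _)
          _ = ‖d n - z‖ := one_mul _
      rw [hxval n] at h2
      simp only [Complex.norm_real, Real.norm_eq_abs, abs_norm] at h2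
      calc ‖d n‖ ≤ ‖d n - z‖ := h2
        _ = ‖z - d n‖ := by rw [norm_sub_rev]
        _ < ‖z‖ / 3 := hn
    have h3 : ‖z‖ ≤ ‖z - d n‖ + ‖d n‖ := by
      calc ‖z‖ = ‖(z - d n) + d n‖ := by rw [sub_add_cancel]
        _ ≤ ‖z - d n‖ + ‖d n‖ := norm_add_le _ _
    have : ‖z‖ < ‖z‖ / 3 + ‖z‖ / 3 := by
      calc ‖z‖ ≤ ‖z - d n‖ + ‖d n‖ := h3
        _ < ‖z‖ / 3 + ‖z‖ / 3 := add_lt_add hn h1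
    linarith
  have hemb : MeasurableEmbedding ι := hιcont.measurableEmbedding hιinj
  rw [← hemb.measurable_comp_iff]
  rw [measurable_pi_iff]
  intro n
  exact ((hfw (xseq n)).measurable)

lemma semigroup_strong_cont_zero (Y : Type*) [NormedAddCommGroup Y] [NormedSpace ℂ Y]
    [CompleteSpace Y] [TopologicalSpace.SeparableSpace Y]
    (S : ℝ≥0 → Y →L[ℂ] Y)
    (hS0 : ∀ y : Y, S 0 y = y)
    (hSadd : ∀ s t : ℝ≥0, ∀ y : Y, S (s + t) y = S s (S t y))
    (hSnorm : ∀ (t : ℝ≥0) (y : Y), ‖S t y‖ ≤ ‖y‖)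
    (hw : ∀ (x : Y →L[ℂ] ℂ) (y : Y), Continuous fun t : ℝ≥0 => x (S t y)) (y : Y) :
    Filter.Tendsto (fun h : ℝ≥0 => S h y) (nhds 0) (nhds y) := by
  classical
  set f : ℝ → Y := fun s => S s.toNNReal y with hf
  have hfw : ∀ x : Y →L[ℂ] ℂ, Continuous fun s => x (f s) := fun x =>
    (hw x y).comp continuous_real_toNNReal
  have hfnorm : ∀ s : ℝ, ‖f s‖ ≤ ‖y‖ := fun s => hSnorm _ y
  have hsm := weak_stronglyMeasurable Y f hfw
  have hint : ∀ a b : ℝ, IntervalIntegrable f MeasureTheory.volume a b := by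
    intro a b
    have hconst : IntervalIntegrable (fun _ : ℝ => ‖y‖) MeasureTheory.volume a b :=
      intervalIntegrable_const
    rw [intervalIntegrable_iff] at hconst ⊢
    refine MeasureTheory.Integrable.mono' hconst hsm.aestronglyMeasurable ?_
    filter_upwards with s using hfnorm s
  have hF0 : f 0 = y := by simp [hf, hS0]
  have hshift : ∀ (hh : ℝ≥0) (s : ℝ), 0 ≤ s → S hh (f s) = f (s + (hh : ℝ)) := by
    intro hh s hs
    have h1 : (s + (hh : ℝ)).toNNReal = hh + s.toNNReal := by
      rw [Real.toNNReal_add hs hh.coe_nonneg, Real.toNNReal_coe, add_comm]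
    simp only [hf]
    rw [h1, hSadd]
  set z : ℝ → Y := fun t => t⁻¹ • ∫ s in (0:ℝ)..t, f s with hz
  have key1 : ∀ (x : Y →L[ℂ] ℂ) (t : ℝ), x (z t) = t⁻¹ • ∫ s in (0:ℝ)..t, x (f s) := by
    intro x t
    simp only [hz]
    rw [ContinuousLinearMap.map_smul_of_tower,
      ContinuousLinearMap.intervalIntegral_comp_comm x (hint 0 t)]
  have key2 : ∀ (hh : ℝ≥0) (t : ℝ), 0 < t →
      S hh (z t) - z t
        = t⁻¹ • ((∫ s in t..(t + (hh : ℝ)), f s) - ∫ s in (0:ℝ)..(hh : ℝ), f s) := by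
    intro hh t ht
    have e1 : S hh (z t) = t⁻¹ • ∫ s in (0:ℝ)..t, S hh (f s) := by
      simp only [hz]
      rw [ContinuousLinearMap.map_smul_of_tower,
        ContinuousLinearMap.intervalIntegral_comp_comm (S hh) (hint 0 t)]
    have e2 : (∫ s in (0:ℝ)..t, S hh (f s)) = ∫ s in (0:ℝ)..t, f (s + (hh : ℝ)) := by
      apply intervalIntegral.integral_congr
      intro s hs
      rw [Set.uIcc_of_le ht.le] at hs
      exact hshift hh s hs.1
    have e3 : (∫ s in (0:ℝ)..t, f (s + (hh : ℝ)))
        = ∫ s in ((hh : ℝ))..(t + (hh : ℝ)), f s := by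
      simpa using intervalIntegral.integral_comp_add_right (a := 0) (b := t) f (hh : ℝ)
    have e4 : (∫ s in ((hh : ℝ))..(t + (hh : ℝ)), f s)
        = (∫ s in ((hh : ℝ))..t, f s) + ∫ s in t..(t + (hh : ℝ)), f s :=
      (intervalIntegral.integral_add_adjacent_intervals (hint _ _) (hint _ _)).symm
    have e5 : (∫ s in (0:ℝ)..t, f s)
        = (∫ s in (0:ℝ)..(hh : ℝ), f s) + ∫ s in ((hh : ℝ))..t, f s :=
      (intervalIntegral.integral_add_adjacent_intervals (hint _ _) (hint _ _)).symm
    rw [e1, e2, e3, e4]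
    conv_lhs => rw [hz]
    simp only []
    rw [e5, ← smul_sub]
    congr 1
    abel
  have key3 : ∀ (hh : ℝ≥0) (t : ℝ), 0 < t →
      ‖S hh (z t) - z t‖ ≤ t⁻¹ * (2 * ‖y‖ * (hh : ℝ)) := by
    intro hh t ht
    rw [key2 hh t ht, norm_smul]
    have b1 : ‖∫ s in t..(t + (hh : ℝ)), f s‖ ≤ ‖y‖ * (hh : ℝ) := by
      have := intervalIntegral.norm_integral_le_of_norm_le_const
        (a := t) (b := t + (hh : ℝ)) (C := ‖y‖) (f := f) (fun s _ => hfnorm s)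
      simpa using this
    have b2 : ‖∫ s in (0:ℝ)..(hh : ℝ), f s‖ ≤ ‖y‖ * (hh : ℝ) := by
      have := intervalIntegral.norm_integral_le_of_norm_le_const
        (a := 0) (b := (hh : ℝ)) (C := ‖y‖) (f := f) (fun s _ => hfnorm s)
      simpa using this
    have hnn : ‖(t⁻¹ : ℝ)‖ = t⁻¹ := by
      rw [Real.norm_eq_abs, abs_of_nonneg (inv_nonneg.mpr ht.le)]
    rw [hnn]
    have := norm_sub_le (∫ s in t..(t + (hh : ℝ)), f s) (∫ s in (0:ℝ)..(hh : ℝ), f s)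
    have h2 : ‖(∫ s in t..(t + (hh : ℝ)), f s) - ∫ s in (0:ℝ)..(hh : ℝ), f s‖
        ≤ 2 * ‖y‖ * (hh : ℝ) := by nlinarith
    exact mul_le_mul_of_nonneg_left h2 (inv_nonneg.mpr ht.le)
  -- the set of good vectors
  set G : Set Y := {w | Filter.Tendsto (fun hh : ℝ≥0 => S hh w) (nhds 0) (nhds w)} with hG
  have hG0 : (0 : Y) ∈ G := by
    simp only [hG, Set.mem_setOf_eq, map_zero]
    exact tendsto_const_nhds
  have hGadd : ∀ w w' : Y, w ∈ G → w' ∈ G → w + w' ∈ G := by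
    intro w w' hw1 hw2
    simp only [hG, Set.mem_setOf_eq, map_add]
    exact Filter.Tendsto.add hw1 hw2
  have hGsmul : ∀ (c : ℂ) (w : Y), w ∈ G → c • w ∈ G := by
    intro c w hw1
    simp only [hG, Set.mem_setOf_eq, ContinuousLinearMap.map_smul]
    exact hw1.const_smul c
  have hGapprox : ∀ w : Y, (∀ ε : ℝ, 0 < ε → ∃ w' ∈ G, ‖w - w'‖ < ε) → w ∈ G := by
    intro w happ
    simp only [hG, Set.mem_setOf_eq]
    rw [Metric.tendsto_nhds]
    intro ε hε
    obtain ⟨w', hw'G, hww'⟩ := happ (ε / 3) (by linarith)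
    have h1 := (Metric.tendsto_nhds.mp hw'G) (ε / 3) (by linarith)
    filter_upwards [h1] with hh hhh
    have d1 : dist (S hh w) (S hh w') ≤ ‖w - w'‖ := by
      rw [dist_eq_norm, ← map_sub]
      exact hSnorm _ _
    have d2 : dist (S hh w) w ≤ dist (S hh w) (S hh w') + dist (S hh w') w' + dist w' w :=
      dist_triangle4 _ _ _ _
    have d3 : dist w' w = ‖w - w'‖ := by rw [dist_comm, dist_eq_norm]
    linarith
  have hzG : ∀ t : ℝ, 0 < t → z t ∈ G := by
    intro t ht
    simp only [hG, Set.mem_setOf_eq]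
    have hsub : Filter.Tendsto (fun hh : ℝ≥0 => S hh (z t) - z t) (nhds 0) (nhds 0) := by
      apply squeeze_zero_norm (fun hh => key3 hh t ht)
      have hc : Continuous fun hh : ℝ≥0 => t⁻¹ * (2 * ‖y‖ * (hh : ℝ)) :=
        continuous_const.mul (continuous_const.mul NNReal.continuous_coe)
      have := hc.tendsto 0
      simpa using this
    have := hsub.add (tendsto_const_nhds (x := z t))
    simpa using this
  -- the span of the averages
  set M : Submodule ℂ Y :=
    (Submodule.span ℂ (Set.range fun t : {t : ℝ // 0 < t} => z t.1)).topologicalClosure with hM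
  have hMG : ∀ b ∈ Submodule.span ℂ (Set.range fun t : {t : ℝ // 0 < t} => z t.1), b ∈ G := by
    intro b hb
    induction hb using Submodule.span_induction with
    | mem w hw => obtain ⟨t, rfl⟩ := hw; exact hzG t.1 t.2
    | zero => exact hG0
    | add u v _ _ hu hv => exact hGadd u v hu hv
    | smul c u _ hu => exact hGsmul c u hu
  have hyM : y ∈ M := by
    by_contra hy
    have hconv : Convex ℝ (M : Set Y) := by
      have := (M.restrictScalars ℝ).convex
      simpa using this
    obtain ⟨g, u, hgy, hgM⟩ :=
      geometric_hahn_banach_point_closed hconv (by rw [hM]; exact Submodule.isClosed_topologicalClosure _) hy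
    have hgzero : ∀ b ∈ M, g b = 0 := by
      intro b hb
      by_contra hgb
      have hlt : ∀ r : ℝ, u < r * g b := by
        intro r
        have hrb : r • b ∈ M := (M.restrictScalars ℝ).smul_mem r hb
        have := hgM _ hrb
        simpa [_root_.map_smul, smul_eq_mul] using this
      have := hlt ((u - 1) / g b)
      rw [div_mul_cancel₀ _ hgb] at this
      linarith
    have hu0 : u < 0 := by
      have := hgM 0 M.zero_mem
      simpa using this
    set x : Y →L[ℂ] ℂ := StrongDual.extendRCLike g with hx
    have hxM : ∀ b ∈ M, x b = 0 := by
      intro b hb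
      rw [hx, ContinuousLinearMap.extendTo𝕜'_apply]
      rw [hgzero b hb, hgzero _ (M.smul_mem _ hb)]
      simp
    have hgy0 : g y ≠ 0 := by
      intro h
      rw [h] at hgy
      linarith
    have hxy : x y ≠ 0 := by
      rw [hx, ContinuousLinearMap.extendTo𝕜'_apply]
      intro h
      have := congrArg Complex.re h
      simp [Complex.ext_iff] at this
      exact hgy0 this
    apply hxy
    rw [← norm_eq_zero]
    have hb : ∀ ε : ℝ, 0 < ε → ‖x y‖ ≤ ε := by
      intro ε hε
      have hcx : Continuous fun s : ℝ => x (f s) := hfw x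
      have hc0 : ContinuousAt (fun s : ℝ => x (f s)) 0 := hcx.continuousAt
      rw [Metric.continuousAt_iff] at hc0
      obtain ⟨δ, hδ, hδs⟩ := hc0 ε hε
      set t : ℝ := δ / 2 with htdef
      have ht : 0 < t := by positivity
      have hz0 : x (z t) = 0 := by
        apply hxM
        apply Submodule.le_topologicalClosure
        exact Submodule.subset_span ⟨⟨t, ht⟩, rfl⟩
      -- x (z t) - x y = average of (x ∘ f - x (f 0))
      have hdiff : x (z t) - x y
          = t⁻¹ • ∫ s in (0:ℝ)..t, (x (f s) - x (f 0)) := by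
        rw [key1 x t]
        have hint1 : IntervalIntegrable (fun s => x (f s)) MeasureTheory.volume 0 t :=
          hcx.intervalIntegrable 0 t
        rw [intervalIntegral.integral_sub hint1 intervalIntegrable_const,
          intervalIntegral.integral_const, smul_sub, hF0]
        congr 1
        rw [smul_smul]
        rw [sub_zero, inv_mul_cancel₀ (ne_of_gt ht), one_smul]
      have hbound : ‖x (z t) - x y‖ ≤ ε := by
        rw [hdiff, norm_smul]
        have hib : ‖∫ s in (0:ℝ)..t, (x (f s) - x (f 0))‖ ≤ ε * |t - 0| := by
          apply intervalIntegral.norm_integral_le_of_norm_le_const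
          intro s hs
          rw [Set.uIoc_of_le ht.le] at hs
          have : dist s 0 < δ := by
            rw [Real.dist_eq, sub_zero, abs_of_pos hs.1]
            calc s ≤ t := hs.2
              _ < δ := by rw [htdef]; linarith
          have := le_of_lt (hδs this)
          rwa [dist_eq_norm] at this
        calc ‖(t⁻¹ : ℝ)‖ * ‖∫ s in (0:ℝ)..t, (x (f s) - x (f 0))‖
            ≤ ‖(t⁻¹ : ℝ)‖ * (ε * |t - 0|) :=
              mul_le_mul_of_nonneg_left hib (norm_nonneg _)
          _ = ε := by
            rw [Real.norm_eq_abs, sub_zero, abs_of_pos (inv_pos.mpr ht), abs_of_pos ht]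
            field_simp
      rw [hz0] at hbound
      simpa using hbound
    have h0 : ‖x y‖ ≤ 0 := le_of_forall_pos_le_add (by intro ε hε; simpa using hb ε hε)
    exact le_antisymm h0 (norm_nonneg _)
  -- conclude
  apply hGapprox
  intro ε hε
  have hyc : y ∈ closure ((Submodule.span ℂ
      (Set.range fun t : {t : ℝ // 0 < t} => z t.1) : Submodule ℂ Y) : Set Y) := by
    rw [← Submodule.topologicalClosure_coe]
    exact hyM
  obtain ⟨b, hb, hdb⟩ := Metric.mem_closure_iff.mp hyc ε hε
  exact ⟨b, hMG b hb, by rwa [← dist_eq_norm]⟩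

lemma semigroup_strong_cont (Y : Type*) [NormedAddCommGroup Y] [NormedSpace ℂ Y]
    [CompleteSpace Y] [TopologicalSpace.SeparableSpace Y]
    (S : ℝ≥0 → Y →L[ℂ] Y)
    (hS0 : ∀ y : Y, S 0 y = y)
    (hSadd : ∀ s t : ℝ≥0, ∀ y : Y, S (s + t) y = S s (S t y))
    (hSnorm : ∀ (t : ℝ≥0) (y : Y), ‖S t y‖ ≤ ‖y‖)
    (hw : ∀ (x : Y →L[ℂ] ℂ) (y : Y), Continuous fun t : ℝ≥0 => x (S t y)) (y : Y) :
    Continuous fun t : ℝ≥0 => S t y := by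
  rw [continuous_iff_continuousAt]
  intro t₀
  have h0 := semigroup_strong_cont_zero Y S hS0 hSadd hSnorm hw y
  have hbound : ∀ t : ℝ≥0,
      ‖S t y - S t₀ y‖ ≤ ‖S (t - t₀) y - y‖ + ‖S (t₀ - t) y - y‖ := by
    intro t
    rcases le_total t₀ t with h | h
    · have h1 : t₀ + (t - t₀) = t := add_tsub_cancel_of_le h
      have h2 : S t y = S t₀ (S (t - t₀) y) := by
        have := hSadd t₀ (t - t₀) y; rwa [h1] at this
      calc ‖S t y - S t₀ y‖ = ‖S t₀ (S (t - t₀) y - y)‖ := by rw [h2, map_sub]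
        _ ≤ ‖S (t - t₀) y - y‖ := hSnorm _ _
        _ ≤ _ := le_add_of_nonneg_right (norm_nonneg _)
    · have h1 : t + (t₀ - t) = t₀ := add_tsub_cancel_of_le h
      have h2 : S t₀ y = S t (S (t₀ - t) y) := by
        have := hSadd t (t₀ - t) y; rwa [h1] at this
      calc ‖S t y - S t₀ y‖ = ‖S t₀ y - S t y‖ := norm_sub_rev _ _
        _ = ‖S t (S (t₀ - t) y - y)‖ := by rw [h2, map_sub]
        _ ≤ ‖S (t₀ - t) y - y‖ := hSnorm _ _
        _ ≤ _ := le_add_of_nonneg_left (norm_nonneg _)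
  have c1 : Tendsto (fun t : ℝ≥0 => t - t₀) (nhds t₀) (nhds 0) := by
    have hc : Continuous fun t : ℝ≥0 => t - t₀ := continuous_id.sub continuous_const
    simpa [tsub_self] using hc.tendsto t₀
  have c2 : Tendsto (fun t : ℝ≥0 => t₀ - t) (nhds t₀) (nhds 0) := by
    have hc : Continuous fun t : ℝ≥0 => t₀ - t := continuous_const.sub continuous_id
    simpa [tsub_self] using hc.tendsto t₀
  have l1 : Tendsto (fun t : ℝ≥0 => ‖S (t - t₀) y - y‖) (nhds t₀) (nhds 0) := by
    have := ((h0.comp c1).sub (tendsto_const_nhds (x := y))).norm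
    simpa using this
  have l2 : Tendsto (fun t : ℝ≥0 => ‖S (t₀ - t) y - y‖) (nhds t₀) (nhds 0) := by
    have := ((h0.comp c2).sub (tendsto_const_nhds (x := y))).norm
    simpa using this
  have hb := l1.add l2
  rw [add_zero] at hb
  have hsub : Tendsto (fun t : ℝ≥0 => S t y - S t₀ y) (nhds t₀) (nhds 0) :=
    squeeze_zero_norm hbound hb
  have := hsub.add (tendsto_const_nhds (x := S t₀ y))
  simpa [ContinuousAt] using this

lemma evalw_cont (Y : Type*) [NormedAddCommGroup Y] [NormedSpace ℂ Y] (y : Y) :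
    @Continuous (Y →L[ℂ] ℂ) ℂ (TopologicalSpace.induced
      (fun (x : Y →L[ℂ] ℂ) (y : Y) => x y) Pi.topologicalSpace) _
      (fun x : Y →L[ℂ] ℂ => x y) :=
  @Continuous.comp (Y →L[ℂ] ℂ) (Y → ℂ) ℂ
    (TopologicalSpace.induced (fun (x : Y →L[ℂ] ℂ) (y : Y) => x y) Pi.topologicalSpace)
    Pi.topologicalSpace _ (fun (x : Y →L[ℂ] ℂ) (y : Y) => x y) (fun g => g y)
    (continuous_apply y) continuous_induced_dom

lemma subeval_cont (Y : Type*) [NormedAddCommGroup Y] [NormedSpace ℂ Y] (v : Y) :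
    @Continuous {x : Y →L[ℂ] ℂ // ‖x‖ ≤ 1} ℂ
      (TopologicalSpace.induced Subtype.val (TopologicalSpace.induced
        (fun (x : Y →L[ℂ] ℂ) (y : Y) => x y) Pi.topologicalSpace)) _
      (fun q => (q.1 : Y →L[ℂ] ℂ) v) :=
  @Continuous.comp {x : Y →L[ℂ] ℂ // ‖x‖ ≤ 1} (Y →L[ℂ] ℂ) ℂ
    (TopologicalSpace.induced Subtype.val (TopologicalSpace.induced
      (fun (x : Y →L[ℂ] ℂ) (y : Y) => x y) Pi.topologicalSpace))
    (TopologicalSpace.induced (fun (x : Y →L[ℂ] ℂ) (y : Y) => x y) Pi.topologicalSpace)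
    _ Subtype.val (fun x : Y →L[ℂ] ℂ => x v)
    (evalw_cont Y v) continuous_induced_dom

lemma snd_cont (Y : Type*) [NormedAddCommGroup Y] [NormedSpace ℂ Y] :
    @Continuous (ℝ≥0 × {x : Y →L[ℂ] ℂ // ‖x‖ ≤ 1}) {x : Y →L[ℂ] ℂ // ‖x‖ ≤ 1}
      (@instTopologicalSpaceProd _ _ _ (TopologicalSpace.induced Subtype.val
        (TopologicalSpace.induced
        (fun (x : Y →L[ℂ] ℂ) (y : Y) => x y) Pi.topologicalSpace)))
      (TopologicalSpace.induced Subtype.val (TopologicalSpace.induced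
        (fun (x : Y →L[ℂ] ℂ) (y : Y) => x y) Pi.topologicalSpace))
      Prod.snd :=
  @continuous_snd _ _ _ (TopologicalSpace.induced Subtype.val (TopologicalSpace.induced
        (fun (x : Y →L[ℂ] ℂ) (y : Y) => x y) Pi.topologicalSpace))

lemma fst_cont (Y : Type*) [NormedAddCommGroup Y] [NormedSpace ℂ Y] :
    @Continuous (ℝ≥0 × {x : Y →L[ℂ] ℂ // ‖x‖ ≤ 1}) ℝ≥0
      (@instTopologicalSpaceProd _ _ _ (TopologicalSpace.induced Subtype.val
        (TopologicalSpace.induced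
        (fun (x : Y →L[ℂ] ℂ) (y : Y) => x y) Pi.topologicalSpace)))
      _ Prod.fst :=
  @continuous_fst _ _ _ (TopologicalSpace.induced Subtype.val (TopologicalSpace.induced
        (fun (x : Y →L[ℂ] ℂ) (y : Y) => x y) Pi.topologicalSpace))

/-- A weak-* continuous semigroup of weak-* continuous contractions on the dual of a
separable Banach space is jointly weak-* continuous in `(t, x)` on the closed unit ball. -/
theorem stmt3 (Y : Type*) [NormedAddCommGroup Y] [NormedSpace ℂ Y] [CompleteSpace Y]
    [TopologicalSpace.SeparableSpace Y]
    (T : ℝ≥0 → (Y →L[ℂ] ℂ) →ₗ[ℂ] (Y →L[ℂ] ℂ))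
    (hT0 : T 0 = LinearMap.id)
    (hTadd : ∀ s t : ℝ≥0, T (s + t) = (T s).comp (T t))
    (hcontr : ∀ (t : ℝ≥0) (x : Y →L[ℂ] ℂ), ‖T t x‖ ≤ ‖x‖)
    -- the weak-* topology on the dual `Y →L[ℂ] ℂ`
    (wstar : TopologicalSpace (Y →L[ℂ] ℂ))
    (hwstar : wstar = TopologicalSpace.induced
      (fun (x : Y →L[ℂ] ℂ) (y : Y) => x y) Pi.topologicalSpace)
    -- each `T t` is weak-* continuous
    (hTw : ∀ t : ℝ≥0, @Continuous _ _ wstar wstar (T t))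
    -- `t ↦ T t x` is weak-* continuous for each `x`
    (hTx : ∀ x : Y →L[ℂ] ℂ, @Continuous ℝ≥0 _ _ wstar fun t => T t x) :
    @Continuous (ℝ≥0 × {x : Y →L[ℂ] ℂ // ‖x‖ ≤ 1}) {x : Y →L[ℂ] ℂ // ‖x‖ ≤ 1}
      (@instTopologicalSpaceProd _ _ _ (TopologicalSpace.induced Subtype.val wstar))
      (TopologicalSpace.induced Subtype.val wstar)
      (fun p => ⟨T p.1 p.2.1, (hcontr p.1 p.2.1).trans p.2.2⟩) := by
  subst hwstar
  classical
  have hsep : ∀ u v : Y, (∀ x : Y →L[ℂ] ℂ, x u = x v) → u = v := by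
    intro u v h
    exact (NormedSpace.eq_iff_forall_dual_eq ℂ).mpr h
  -- the composite functional x ↦ T t x y is weak-* continuous
  have hφc : ∀ (t : ℝ≥0) (y : Y), @Continuous (Y →L[ℂ] ℂ) ℂ (TopologicalSpace.induced
      (fun (x : Y →L[ℂ] ℂ) (y : Y) => x y) Pi.topologicalSpace) _ (fun x => T t x y) :=
    fun t y => @Continuous.comp (Y →L[ℂ] ℂ) (Y →L[ℂ] ℂ) ℂ
      (TopologicalSpace.induced (fun (x : Y →L[ℂ] ℂ) (y : Y) => x y) Pi.topologicalSpace)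
      (TopologicalSpace.induced (fun (x : Y →L[ℂ] ℂ) (y : Y) => x y) Pi.topologicalSpace)
      _ (T t) (fun x : Y →L[ℂ] ℂ => x y) (evalw_cont Y y) (hTw t)
  have hrep : ∀ (t : ℝ≥0) (y : Y), ∃ z : Y, ∀ x : Y →L[ℂ] ℂ, T t x y = x z := by
    intro t y
    have hl : ∀ (a b : Y →L[ℂ] ℂ), T t (a + b) y = T t a y + T t b y := by
      intro a b; rw [map_add]; rfl
    have hs : ∀ (c : ℂ) (a : Y →L[ℂ] ℂ), T t (c • a) y = c • (T t a y) := by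
      intro c a; rw [_root_.map_smul]; rfl
    exact wstar_rep Y
      { toFun := fun x => T t x y
        map_add' := hl
        map_smul' := hs } (hφc t y)
  choose S0 hS0' using hrep
  have hSnorm0 : ∀ (t : ℝ≥0) (y : Y), ‖S0 t y‖ ≤ ‖y‖ := by
    intro t y
    apply NormedSpace.norm_le_dual_bound ℂ _ (norm_nonneg y)
    intro x
    rw [← hS0' t y x]
    calc ‖T t x y‖ ≤ ‖T t x‖ * ‖y‖ := (T t x).le_opNorm y
      _ ≤ ‖x‖ * ‖y‖ := mul_le_mul_of_nonneg_right (hcontr t x) (norm_nonneg y)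
      _ = ‖y‖ * ‖x‖ := mul_comm _ _
  have hSadd0 : ∀ (t : ℝ≥0) (u v : Y), S0 t (u + v) = S0 t u + S0 t v := by
    intro t u v
    apply hsep
    intro x
    rw [← hS0' t (u + v) x, map_add]
    rw [map_add x (S0 t u) (S0 t v), ← hS0' t u x, ← hS0' t v x]
  have hSsmul0 : ∀ (t : ℝ≥0) (c : ℂ) (u : Y), S0 t (c • u) = c • S0 t u := by
    intro t c u
    apply hsep
    intro x
    rw [← hS0' t (c • u) x, _root_.map_smul]
    rw [_root_.map_smul x c (S0 t u), ← hS0' t u x]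
  let S : ℝ≥0 → Y →L[ℂ] Y := fun t =>
    LinearMap.mkContinuous
      { toFun := S0 t
        map_add' := hSadd0 t
        map_smul' := hSsmul0 t } 1
      (fun y => by simpa using hSnorm0 t y)
  have hS : ∀ (t : ℝ≥0) (y : Y) (x : Y →L[ℂ] ℂ), T t x y = x (S t y) := hS0'
  have hS0 : ∀ y : Y, S 0 y = y := by
    intro y
    apply hsep
    intro x
    rw [← hS 0 y x, hT0]
    rfl
  have hSadd : ∀ s t : ℝ≥0, ∀ y : Y, S (s + t) y = S s (S t y) := by
    intro s t y
    apply hsep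
    intro x
    rw [← hS (s + t) y x, add_comm s t, hTadd t s]
    have h1 : (T t).comp (T s) x = T t (T s x) := rfl
    rw [h1, hS t y (T s x), hS s (S t y) x]
  have hw : ∀ (x : Y →L[ℂ] ℂ) (y : Y), Continuous fun t : ℝ≥0 => x (S t y) := by
    intro x y
    have h1 : (fun t : ℝ≥0 => x (S t y)) = fun t : ℝ≥0 => T t x y := by
      funext t; rw [hS t y x]
    rw [h1]
    exact @Continuous.comp ℝ≥0 (Y →L[ℂ] ℂ) ℂ _
      (TopologicalSpace.induced (fun (x : Y →L[ℂ] ℂ) (y : Y) => x y) Pi.topologicalSpace)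
      _ (fun t => T t x) (fun x' : Y →L[ℂ] ℂ => x' y) (evalw_cont Y y) (hTx x)
  have hScont : ∀ y : Y, Continuous fun t : ℝ≥0 => S t y :=
    semigroup_strong_cont Y S hS0 hSadd hSnorm0 hw
  -- joint continuity
  have key : ∀ y : Y, @Continuous (ℝ≥0 × {x : Y →L[ℂ] ℂ // ‖x‖ ≤ 1}) ℂ
      (@instTopologicalSpaceProd _ _ _ (TopologicalSpace.induced Subtype.val
        (TopologicalSpace.induced
        (fun (x : Y →L[ℂ] ℂ) (y : Y) => x y) Pi.topologicalSpace))) _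
      (fun p => (p.2.1 : Y →L[ℂ] ℂ) (S p.1 y)) := by
    intro y
    rw [@continuous_iff_continuousAt (ℝ≥0 × {x : Y →L[ℂ] ℂ // ‖x‖ ≤ 1}) ℂ
      (@instTopologicalSpaceProd _ _ _ (TopologicalSpace.induced Subtype.val
        (TopologicalSpace.induced
        (fun (x : Y →L[ℂ] ℂ) (y : Y) => x y) Pi.topologicalSpace))) _ _]
    rintro ⟨t₀, x₀⟩
    have tfst := @Continuous.tendsto (ℝ≥0 × {x : Y →L[ℂ] ℂ // ‖x‖ ≤ 1}) ℝ≥0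
      (@instTopologicalSpaceProd _ _ _ (TopologicalSpace.induced Subtype.val
        (TopologicalSpace.induced
        (fun (x : Y →L[ℂ] ℂ) (y : Y) => x y) Pi.topologicalSpace))) _ _
      (fst_cont Y) (t₀, x₀)
    have tS := ((hScont y).tendsto t₀).comp tfst
    have tsnd := @Continuous.tendsto (ℝ≥0 × {x : Y →L[ℂ] ℂ // ‖x‖ ≤ 1})
      {x : Y →L[ℂ] ℂ // ‖x‖ ≤ 1}
      (@instTopologicalSpaceProd _ _ _ (TopologicalSpace.induced Subtype.val
        (TopologicalSpace.induced
        (fun (x : Y →L[ℂ] ℂ) (y : Y) => x y) Pi.topologicalSpace)))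
      (TopologicalSpace.induced Subtype.val (TopologicalSpace.induced
        (fun (x : Y →L[ℂ] ℂ) (y : Y) => x y) Pi.topologicalSpace)) _
      (snd_cont Y) (t₀, x₀)
    have tev := @Continuous.tendsto {x : Y →L[ℂ] ℂ // ‖x‖ ≤ 1} ℂ
      (TopologicalSpace.induced Subtype.val (TopologicalSpace.induced
        (fun (x : Y →L[ℂ] ℂ) (y : Y) => x y) Pi.topologicalSpace)) _ _
      (subeval_cont Y (S t₀ y)) x₀
    have t2 := tev.comp tsnd
    have hnb := (tS.sub (tendsto_const_nhds (x := S t₀ y))).norm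
    rw [sub_self, norm_zero] at hnb
    have hb : ∀ p : ℝ≥0 × {x : Y →L[ℂ] ℂ // ‖x‖ ≤ 1},
        ‖(p.2.1 : Y →L[ℂ] ℂ) (S p.1 y - S t₀ y)‖ ≤ ‖S p.1 y - S t₀ y‖ := by
      intro p
      calc ‖(p.2.1 : Y →L[ℂ] ℂ) (S p.1 y - S t₀ y)‖
          ≤ ‖(p.2.1 : Y →L[ℂ] ℂ)‖ * ‖S p.1 y - S t₀ y‖ := (p.2.1).le_opNorm _
        _ ≤ 1 * ‖S p.1 y - S t₀ y‖ := mul_le_mul_of_nonneg_right p.2.2 (norm_nonneg _)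
        _ = ‖S p.1 y - S t₀ y‖ := one_mul _
    have t1 := squeeze_zero_norm
      (f := fun p : ℝ≥0 × {x : Y →L[ℂ] ℂ // ‖x‖ ≤ 1} =>
        (p.2.1 : Y →L[ℂ] ℂ) (S p.1 y - S t₀ y)) hb hnb
    have tsum := t1.add t2
    rw [zero_add] at tsum
    exact tsum.congr (fun p => by simp only [Function.comp_apply, map_sub]; ring)
  refine (continuous_induced_rng (t₁ := @instTopologicalSpaceProd _ _ _
      (TopologicalSpace.induced Subtype.val (TopologicalSpace.induced
        (fun (x : Y →L[ℂ] ℂ) (y : Y) => x y) Pi.topologicalSpace)))).mpr ?_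
  refine (continuous_induced_rng (t₁ := @instTopologicalSpaceProd _ _ _
      (TopologicalSpace.induced Subtype.val (TopologicalSpace.induced
        (fun (x : Y →L[ℂ] ℂ) (y : Y) => x y) Pi.topologicalSpace)))).mpr ?_
  refine @continuous_pi _ _ _ (@instTopologicalSpaceProd _ _ _
      (TopologicalSpace.induced Subtype.val (TopologicalSpace.induced
        (fun (x : Y →L[ℂ] ℂ) (y : Y) => x y) Pi.topologicalSpace))) _ _ ?_
  intro y
  exact @Continuous.congr (ℝ≥0 × {x : Y →L[ℂ] ℂ // ‖x‖ ≤ 1}) ℂ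
    (@instTopologicalSpaceProd _ _ _ (TopologicalSpace.induced Subtype.val
      (TopologicalSpace.induced
      (fun (x : Y →L[ℂ] ℂ) (y : Y) => x y) Pi.topologicalSpace))) _ _ _
    (key y) (fun p => (hS p.1 y p.2.1).symm)
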